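/- Under the error dynamics e(t+1) = A_cl e(t) with A_cl = [[A−BK, LC],[0, A−LC]], if there exists a positive semidefinite Q with e(0) e(0)ᵀ ⪯ Q and A_cl Q A_clᵀ ⪯ Q, then for all t ≥ 0 and for the output difference z(t) − z̄(t) = [H H] e(t), we have ‖z(t) − z̄(t)‖ ≤ ε where ε = sqrt(trace([H H] Q [H H]ᵀ)). -/

import Mathlib

open Matrix

/-- Loewner order: `A ⪯ B` iff `B - A` is positive semidefinite. -/
def LoewnerLE {N : Type*} [Fintype N] (A B : Matrix N N ℝ) : Prop := (B - A).PosSemidef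

lemma vecMulVec_mulVec {m k : Type*} [Fintype m] [Fintype k] [DecidableEq m]
    (A : Matrix k m ℝ) (x : m → ℝ) :
    Matrix.vecMulVec (A.mulVec x) (A.mulVec x) = A * Matrix.vecMulVec x x * Aᵀ := by
  ext i j
  simp [Matrix.vecMulVec, Matrix.mulVec, Matrix.mul_apply, dotProduct,
    Finset.sum_mul, Finset.mul_sum]
  apply Finset.sum_congr rfl
  intro a _
  apply Finset.sum_congr rfl
  intro b _
  ring

theorem interface_accuracy (n q : ℕ)
    (Acl Q : Matrix (Fin n ⊕ Fin n) (Fin n ⊕ Fin n) ℝ)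
    (H : Matrix (Fin q) (Fin n) ℝ)
    (M : Matrix (Fin q) (Fin n ⊕ Fin n) ℝ) (hM : M = Matrix.fromCols H H)
    (hQ : Q.PosSemidef)
    (e0 : Fin n ⊕ Fin n → ℝ)
    (hInit : LoewnerLE (Matrix.vecMulVec e0 e0) Q)
    (hLyap : LoewnerLE (Acl * Q * Aclᵀ) Q)
    (e : ℕ → (Fin n ⊕ Fin n → ℝ)) (he : ∀ t, e t = (Acl ^ t).mulVec e0) :
    ∀ t, Real.sqrt (∑ i, (M.mulVec (e t)) i ^ 2) ≤
      Real.sqrt (Matrix.trace (M * Q * Mᵀ)) := by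
  -- invariance: e t (e t)ᵀ ⪯ Q for all t
  have key : ∀ t, LoewnerLE (Matrix.vecMulVec (e t) (e t)) Q := by
    intro t
    induction t with
    | zero => simpa [he 0, Matrix.mulVec_one] using hInit
    | succ t ih =>
      have het : e (t + 1) = Acl.mulVec (e t) := by
        rw [he (t+1), he t, pow_succ', Matrix.mulVec_mulVec]
      rw [het, _root_.vecMulVec_mulVec]
      have h1 : (Acl * (Q - Matrix.vecMulVec (e t) (e t)) * Aclᵀ).PosSemidef := by
        have := ih.mul_mul_conjTranspose_same Acl
        simpa [Matrix.conjTranspose_eq_transpose_of_trivial] using this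
      have : Q - Acl * Matrix.vecMulVec (e t) (e t) * Aclᵀ =
          (Q - Acl * Q * Aclᵀ) + Acl * (Q - Matrix.vecMulVec (e t) (e t)) * Aclᵀ := by
        noncomm_ring
      unfold LoewnerLE
      rw [this]
      exact hLyap.add h1
  intro t
  apply Real.sqrt_le_sqrt
  have hsum : ∑ i, (M.mulVec (e t)) i ^ 2 =
      Matrix.trace (M * Matrix.vecMulVec (e t) (e t) * Mᵀ) := by
    rw [← _root_.vecMulVec_mulVec, Matrix.trace]
    simp [Matrix.vecMulVec, sq]
  rw [hsum]
  have hdiff : (M * (Q - Matrix.vecMulVec (e t) (e t)) * Mᵀ).PosSemidef := by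
    have := (key t).mul_mul_conjTranspose_same M
    simpa [Matrix.conjTranspose_eq_transpose_of_trivial] using this
  have htr : 0 ≤ Matrix.trace (M * (Q - Matrix.vecMulVec (e t) (e t)) * Mᵀ) := by
    rw [Matrix.trace]
    apply Finset.sum_nonneg
    intro i _
    exact hdiff.diag_nonneg
  have heq : M * (Q - Matrix.vecMulVec (e t) (e t)) * Mᵀ =
      M * Q * Mᵀ - M * Matrix.vecMulVec (e t) (e t) * Mᵀ := by
    rw [Matrix.mul_sub, Matrix.sub_mul]
  rw [heq, Matrix.trace_sub] at htr
  linarith [htr]
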